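/- arXiv:2602.16456 — 2 statements merged into one kernel-verified Lean document; each statement's English description precedes it below -/
import Mathlib

section
/- Let W̄ ∈ R^{m×n}, and let U ∈ R^{m×r}, V ∈ R^{n×r} satisfy the coupled fixed-point equations U = W̄ V (VᵀV)⁺ and V = W̄ᵀ U (UᵀU)⁺ (pseudoinverse version, λ = 0). Then U Vᵀ = W̄ P_V = P_U W̄, where P_X = X (XᵀX)⁺ Xᵀ denotes orthogonal projection onto the column space of X. -/
open Matrix

/-- `P` is the Moore–Penrose pseudoinverse of `A` (four Penrose conditions). -/
def IsMoorePenrose {r : ℕ} (A P : Matrix (Fin r) (Fin r) ℝ) : Prop :=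
  A * P * A = A ∧ P * A * P = P ∧ (A * P)ᵀ = A * P ∧ (P * A)ᵀ = P * A

lemma mp_unique {r : ℕ} {A P Q : Matrix (Fin r) (Fin r) ℝ}
    (hP : IsMoorePenrose A P) (hQ : IsMoorePenrose A Q) : P = Q := by
  obtain ⟨hP1, hP2, hP3, hP4⟩ := hP
  obtain ⟨hQ1, hQ2, hQ3, hQ4⟩ := hQ
  have key1 : P * A * Q = Q := by
    calc P * A * Q = (P * A) * (Q * A * Q) := by rw [hQ2]
      _ = ((Q * A) * (P * A))ᵀ * Q := by
          rw [Matrix.transpose_mul, hP4, hQ4]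
          simp [Matrix.mul_assoc]
      _ = (Q * (A * P * A))ᵀ * Q := by simp [Matrix.mul_assoc]
      _ = (Q * A)ᵀ * Q := by rw [hP1]
      _ = Q * A * Q := by rw [hQ4]
      _ = Q := hQ2
  have key2 : P * A * Q = P := by
    calc P * A * Q = (P * A * P) * (A * Q) := by rw [hP2, Matrix.mul_assoc]
      _ = P * ((A * Q) * (A * P))ᵀ := by
          rw [Matrix.transpose_mul, hP3, hQ3]
          simp [Matrix.mul_assoc]
      _ = P * ((A * Q * A) * P)ᵀ := by simp [Matrix.mul_assoc]
      _ = P * (A * P)ᵀ := by rw [hQ1]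
      _ = P * (A * P) := by rw [hP3]
      _ = P := by rw [← Matrix.mul_assoc]; exact hP2
  rw [← key2, key1]

lemma mp_symm {r : ℕ} {A P : Matrix (Fin r) (Fin r) ℝ} (hA : Aᵀ = A)
    (hP : IsMoorePenrose A P) : Pᵀ = P := by
  obtain ⟨hP1, hP2, hP3, hP4⟩ := hP
  refine mp_unique ⟨?_, ?_, ?_, ?_⟩ ⟨hP1, hP2, hP3, hP4⟩
  · calc A * Pᵀ * A = (Aᵀ * P * Aᵀ)ᵀ := by simp [Matrix.transpose_mul, Matrix.mul_assoc]
      _ = (A * P * A)ᵀ := by rw [hA]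
      _ = A := by rw [hP1, hA]
  · calc Pᵀ * A * Pᵀ = (Pᵀ * Aᵀ) * Pᵀ := by rw [hA]
      _ = (P * (A * P))ᵀ := by simp [Matrix.transpose_mul, Matrix.mul_assoc]
      _ = Pᵀ := by rw [← Matrix.mul_assoc, hP2]
  · calc (A * Pᵀ)ᵀ = P * Aᵀ := by simp
      _ = P * A := by rw [hA]
      _ = (P * A)ᵀ := hP4.symm
      _ = Aᵀ * Pᵀ := by simp
      _ = A * Pᵀ := by rw [hA]
  · calc (Pᵀ * A)ᵀ = Aᵀ * P := by simp
      _ = A * P := by rw [hA]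
      _ = (A * P)ᵀ := hP3.symm
      _ = Pᵀ * Aᵀ := by simp
      _ = Pᵀ * A := by rw [hA]

/-- If `U = W̄ V (VᵀV)⁺` and `V = W̄ᵀ U (UᵀU)⁺`, then
`U Vᵀ = W̄ P_V = P_U W̄` where `P_X = X (XᵀX)⁺ Xᵀ`. -/
theorem fixed_point_projection {m n r : ℕ}
    (Wbar : Matrix (Fin m) (Fin n) ℝ)
    (U : Matrix (Fin m) (Fin r) ℝ) (V : Matrix (Fin n) (Fin r) ℝ)
    (Pv Pu : Matrix (Fin r) (Fin r) ℝ)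
    (hPv : IsMoorePenrose (Vᵀ * V) Pv)
    (hPu : IsMoorePenrose (Uᵀ * U) Pu)
    (hU : U = Wbar * V * Pv)
    (hV : V = Wbarᵀ * U * Pu) :
    U * Vᵀ = Wbar * (V * Pv * Vᵀ) ∧ U * Vᵀ = (U * Pu * Uᵀ) * Wbar := by
  have hPuSymm : Puᵀ = Pu := mp_symm (by simp) hPu
  constructor
  · rw [hU]; simp [Matrix.mul_assoc]
  · conv_lhs => rw [hV]
    simp only [Matrix.transpose_mul, Matrix.transpose_transpose, hPuSymm]
    simp [Matrix.mul_assoc]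
end

section
/- Under the same assumptions (alternating least squares on W̄ with warm start V^{(0)} having nonzero overlap with the top-r right singular subspace, σ_r > σ_{r+1}), there exists a constant C > 0 depending on V^{(0)} such that ‖U^{(k)} (V^{(k)})ᵀ - Π_r(W̄)‖_F² ≤ C (σ_{r+1}/σ_r)^{2k} for all k, where Π_r(W̄) is the best rank-r Frobenius approximation of W̄. In particular U^{(k)}(V^{(k)})ᵀ → Π_r(W̄) as k → ∞. -/
open Matrix BigOperators

set_option linter.unusedSectionVars false
set_option maxHeartbeats 1600000

/-- Squared Frobenius norm of a real matrix. -/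
noncomputable def froSq {m n : ℕ} (A : Matrix (Fin m) (Fin n) ℝ) : ℝ :=
  Matrix.trace (Aᵀ * A)

/-- Column space of a matrix: the span of its columns. -/
def colSpace {n r : ℕ} (A : Matrix (Fin n) (Fin r) ℝ) : Submodule ℝ (Fin n → ℝ) :=
  Submodule.span ℝ (Set.range Aᵀ)

section FrobLemmas

variable {ι κ μ : Type*} [Fintype ι] [Fintype κ] [Fintype μ] [DecidableEq ι] [DecidableEq κ]

noncomputable def frob (A : Matrix ι κ ℝ) : ℝ := ∑ i, ∑ j, (A i j)^2

lemma frob_nonneg (A : Matrix ι κ ℝ) : 0 ≤ frob A := by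
  apply Finset.sum_nonneg; intro i _; apply Finset.sum_nonneg; intro j _; positivity

lemma frob_transpose (A : Matrix ι κ ℝ) : frob Aᵀ = frob A := by
  rw [frob, frob, Finset.sum_comm]; rfl

lemma frob_eq_trace (A : Matrix ι κ ℝ) : frob A = Matrix.trace (Aᵀ * A) := by
  rw [Matrix.trace]
  simp only [Matrix.diag, Matrix.mul_apply, Matrix.transpose_apply]
  rw [frob, Finset.sum_comm]
  congr 1; ext j; congr 1; ext i; ring

lemma frob_mul_le (A : Matrix ι κ ℝ) (B : Matrix κ μ ℝ) :
    frob (A * B) ≤ frob A * frob B := by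
  have h1 : ∀ i k, (∑ j, A i j * B j k)^2 ≤ (∑ j, (A i j)^2) * (∑ j, (B j k)^2) :=
    fun i k => Finset.sum_mul_sq_le_sq_mul_sq _ _ _
  calc frob (A * B) = ∑ i, ∑ k, (∑ j, A i j * B j k)^2 := rfl
    _ ≤ ∑ i, ∑ k, (∑ j, (A i j)^2) * (∑ j, (B j k)^2) := by
        exact Finset.sum_le_sum fun i _ => Finset.sum_le_sum fun k _ => h1 i k
    _ = (∑ i, ∑ j, (A i j)^2) * (∑ k, ∑ j, (B j k)^2) := by
        simp_rw [← Finset.mul_sum, ← Finset.sum_mul]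
    _ = frob A * frob B := by
        rw [show (∑ k, ∑ j, (B j k)^2) = frob B from Finset.sum_comm]; rfl

lemma frob_sub_le (A B : Matrix ι κ ℝ) : frob (A - B) ≤ 2 * frob A + 2 * frob B := by
  rw [frob, frob, frob, Finset.mul_sum, Finset.mul_sum, ← Finset.sum_add_distrib]
  apply Finset.sum_le_sum; intro i _
  rw [Finset.mul_sum, Finset.mul_sum, ← Finset.sum_add_distrib]
  apply Finset.sum_le_sum; intro j _
  simp only [Matrix.sub_apply]
  nlinarith [sq_nonneg (A i j + B i j)]

lemma frob_entry_le (A B : Matrix ι κ ℝ) (h : ∀ i j, (A i j)^2 ≤ (B i j)^2) :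
    frob A ≤ frob B := by
  apply Finset.sum_le_sum; intro i _; apply Finset.sum_le_sum; intro j _; exact h i j

lemma frob_smul (c : ℝ) (A : Matrix ι κ ℝ) : frob (c • A) = c^2 * frob A := by
  rw [frob, frob, Finset.mul_sum]
  congr 1; ext i; rw [Finset.mul_sum]
  congr 1; ext j; simp [Matrix.smul_apply]; ring

lemma sq_le_frob (A : Matrix ι κ ℝ) (i : ι) (j : κ) : (A i j)^2 ≤ frob A := by
  rw [frob]
  calc (A i j)^2 ≤ ∑ j', (A i j')^2 :=
        Finset.single_le_sum (f := fun j' => (A i j')^2) (fun j' _ => sq_nonneg _)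
          (Finset.mem_univ j)
    _ ≤ _ := Finset.single_le_sum (f := fun i' => ∑ j', (A i' j')^2)
        (fun i' _ => Finset.sum_nonneg fun j' _ => sq_nonneg _) (Finset.mem_univ i)

lemma sum_if_eq {q : ℕ} (p : ℕ) (f : Fin q → ℝ) :
    (∑ l : Fin q, if p = (l : ℕ) then f l else 0) = if h : p < q then f ⟨p, h⟩ else 0 := by
  by_cases h : p < q
  · rw [dif_pos h, Finset.sum_eq_single ⟨p, h⟩]
    · simp
    · intro b _ hb
      rw [if_neg]
      intro hc
      exact hb (by ext; simp [← hc])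
    · intro hmem; exact absurd (Finset.mem_univ _) hmem
  · rw [dif_neg h]
    apply Finset.sum_eq_zero; intro l _
    rw [if_neg]
    intro hc
    exact h (hc ▸ l.isLt)

end FrobLemmas

section ProjLemmas

variable {ι κ : Type*} [Fintype ι] [Fintype κ] [DecidableEq ι] [DecidableEq κ]

lemma proj_right_inv (A : Matrix ι κ ℝ) (Q : Matrix κ κ ℝ) (hQ : IsUnit Q)
    (hG : IsUnit ((A*Q)ᵀ*(A*Q))) :
    IsUnit (Aᵀ*A) ∧ (A*Q)*((A*Q)ᵀ*(A*Q))⁻¹*(A*Q)ᵀ = A*(Aᵀ*A)⁻¹*Aᵀ := by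
  have hQt : IsUnit Qᵀ := by
    rw [Matrix.isUnit_iff_isUnit_det, Matrix.det_transpose,
      ← Matrix.isUnit_iff_isUnit_det]; exact hQ
  have hgram : (A*Q)ᵀ*(A*Q) = Qᵀ*(Aᵀ*A)*Q := by
    rw [Matrix.transpose_mul]; simp only [Matrix.mul_assoc]
  have hAA : IsUnit (Aᵀ*A) := by
    have : Aᵀ*A = Qᵀ⁻¹ * ((A*Q)ᵀ*(A*Q)) * Q⁻¹ := by
      rw [hgram]
      rw [← Matrix.mul_assoc, ← Matrix.mul_assoc,
        Matrix.nonsing_inv_mul _ ((Matrix.isUnit_iff_isUnit_det _).mp hQt), Matrix.one_mul,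
        Matrix.mul_assoc, Matrix.mul_nonsing_inv _ ((Matrix.isUnit_iff_isUnit_det _).mp hQ),
        Matrix.mul_one]
    rw [this]
    exact ((Matrix.isUnit_nonsing_inv_iff.mpr hQt).mul hG).mul
      (Matrix.isUnit_nonsing_inv_iff.mpr hQ)
  refine ⟨hAA, ?_⟩
  rw [hgram, Matrix.mul_inv_rev, Matrix.mul_inv_rev]
  rw [Matrix.transpose_mul]
  calc A*Q*(Q⁻¹*((Aᵀ*A)⁻¹*Qᵀ⁻¹))*(Qᵀ*Aᵀ)
      = A*(Q*Q⁻¹)*(Aᵀ*A)⁻¹*(Qᵀ⁻¹*Qᵀ)*Aᵀ := by simp only [Matrix.mul_assoc]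
    _ = A*(Aᵀ*A)⁻¹*Aᵀ := by
        rw [Matrix.mul_nonsing_inv _ ((Matrix.isUnit_iff_isUnit_det _).mp hQ),
          Matrix.nonsing_inv_mul _ ((Matrix.isUnit_iff_isUnit_det _).mp hQt)]
        simp [Matrix.mul_assoc]

lemma proj_facts (M N T : Matrix ι κ ℝ) (hMNT : M = N + T) (hNN : Nᵀ*N = 1)
    (hNT : Nᵀ*T = 0) (hK : IsUnit (Mᵀ*M)) :
    frob (M*(Mᵀ*M)⁻¹*Mᵀ - 1) = (Fintype.card ι : ℝ) - Fintype.card κ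
    ∧ frob (M*(Mᵀ*M)⁻¹) ≤ Fintype.card κ
    ∧ (M*(Mᵀ*M)⁻¹*Mᵀ) * M = M := by
  set K := (Mᵀ*M)⁻¹ with hKdef
  have hdet := (Matrix.isUnit_iff_isUnit_det _).mp hK
  have hKM : K * (Mᵀ*M) = 1 := Matrix.nonsing_inv_mul _ hdet
  have hMK : (Mᵀ*M) * K = 1 := Matrix.mul_nonsing_inv _ hdet
  have hKt : Kᵀ = K := by
    rw [hKdef, Matrix.transpose_nonsing_inv, Matrix.transpose_mul, Matrix.transpose_transpose]
  have hTN : Tᵀ*N = 0 := by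
    have := congrArg Matrix.transpose hNT
    simpa [Matrix.transpose_mul] using this
  set B := Tᵀ*T with hB
  have hgram : Mᵀ*M = 1 + B := by
    rw [hMNT, Matrix.transpose_add, Matrix.add_mul, Matrix.mul_add, Matrix.mul_add,
      hNN, hNT, hTN, hB]
    simp
  set P := M*K*Mᵀ with hPdef
  have hPM : P * M = M := by
    rw [hPdef, Matrix.mul_assoc (M*K), Matrix.mul_assoc M K, hKM, Matrix.mul_one]
  have hPt : Pᵀ = P := by
    rw [hPdef, Matrix.transpose_mul, Matrix.transpose_mul, Matrix.transpose_transpose, hKt,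
      Matrix.mul_assoc]
  have hPP : P * P = P := by
    calc P * P = (P * M) * (K * Mᵀ) := by simp only [hPdef, Matrix.mul_assoc]
      _ = P := by rw [hPM, hPdef, Matrix.mul_assoc]
  have htraceP : Matrix.trace P = (Fintype.card κ : ℝ) := by
    rw [hPdef, Matrix.trace_mul_cycle, hMK, Matrix.trace_one]
  refine ⟨?_, ?_, hPM⟩
  · have hE : (P - 1)ᵀ * (P - 1) = 1 - P := by
      rw [Matrix.transpose_sub, hPt, Matrix.transpose_one]
      calc (P - 1) * (P - 1) = P*P - P - P + 1 := by noncomm_ring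
        _ = 1 - P := by rw [hPP]; abel
    rw [frob_eq_trace, hE, Matrix.trace_sub, Matrix.trace_one, htraceP]
  · have h0 : (M*K)ᵀ*(M*K) = K := by
      rw [Matrix.transpose_mul, hKt]
      calc K*Mᵀ*(M*K) = K*((Mᵀ*M)*K) := by simp only [Matrix.mul_assoc]
        _ = K := by rw [hMK, Matrix.mul_one]
    have hfr : frob (M*K) = Matrix.trace K := by rw [frob_eq_trace, h0]
    have h1 : K + K*B = 1 := by
      have := hKM; rw [hgram, Matrix.mul_add, Matrix.mul_one] at this; exact this
    have hKsplit : K = 1 - K*B := eq_sub_of_add_eq h1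
    have hKB : K*B = K*B*K + K*B*(K*B) := by
      calc K*B = K*B*(K + K*B) := by rw [h1, Matrix.mul_one]
        _ = K*B*K + K*B*(K*B) := by rw [Matrix.mul_add]
    have ht1 : Matrix.trace (K*B*K) = frob (T*K) := by
      rw [frob_eq_trace, Matrix.transpose_mul, hKt, hB]
      simp only [Matrix.mul_assoc]
    have ht2 : Matrix.trace (K*B*(K*B)) = frob (T*K*Tᵀ) := by
      rw [frob_eq_trace]
      have hTsym : (T*K*Tᵀ)ᵀ = T*K*Tᵀ := by
        rw [Matrix.transpose_mul, Matrix.transpose_mul, Matrix.transpose_transpose, hKt,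
          Matrix.mul_assoc]
      rw [hTsym, hB,
        show K*(Tᵀ*T)*(K*(Tᵀ*T)) = (K*Tᵀ)*((T*K*Tᵀ)*T) by simp only [Matrix.mul_assoc],
        Matrix.trace_mul_comm,
        show (T*K*Tᵀ)*T*(K*Tᵀ) = (T*K*Tᵀ)*(T*K*Tᵀ) by simp only [Matrix.mul_assoc]]
    have h2 : Matrix.trace (K*B) = frob (T*K) + frob (T*K*Tᵀ) := by
      rw [hKB, Matrix.trace_add, ht1, ht2]
    have htK : Matrix.trace K = (Fintype.card κ : ℝ) - frob (T*K) - frob (T*K*Tᵀ) := by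
      calc Matrix.trace K = Matrix.trace (1 - K*B) := by rw [← hKsplit]
        _ = (Fintype.card κ : ℝ) - Matrix.trace (K*B) := by
            rw [Matrix.trace_sub, Matrix.trace_one]
        _ = _ := by rw [h2]; ring
    rw [hfr, htK]
    have := frob_nonneg (T*K)
    have := frob_nonneg (T*K*Tᵀ)
    linarith

end ProjLemmas

/-- Warm-started ALS converges linearly to the best rank-`r` approximation
`Π_r(W̄)` at rate `(σ_{r+1}/σ_r)^{2k}` in squared Frobenius norm. Singular
values are 1-indexed: `σ (i+1)` sits at diagonal position `i`. -/
theorem als_subspace_iteration_convergence {m n r : ℕ} (hr : r ≤ min m n)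
    (Wbar : Matrix (Fin m) (Fin n) ℝ)
    (Usv : Matrix (Fin m) (Fin m) ℝ) (Vsv : Matrix (Fin n) (Fin n) ℝ)
    (σ : ℕ → ℝ)
    (hUsv : Usvᵀ * Usv = 1) (hVsv : Vsvᵀ * Vsv = 1)
    (hσnonneg : ∀ i, 0 ≤ σ i) (hσmono : ∀ i, σ (i + 1) ≤ σ i)
    (hgap : σ (r + 1) < σ r)
    (hW : Wbar = Usv * (Matrix.of fun (i : Fin m) (j : Fin n) =>
        if (i : ℕ) = (j : ℕ) then σ ((i : ℕ) + 1) else 0) * Vsvᵀ)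
    (U : ℕ → Matrix (Fin m) (Fin r) ℝ) (V : ℕ → Matrix (Fin n) (Fin r) ℝ)
    (hVGram : ∀ k, IsUnit ((V k)ᵀ * V k))
    (hUGram : ∀ k, IsUnit ((U (k + 1))ᵀ * U (k + 1)))
    (hUrec : ∀ k, U (k + 1) = Wbar * V k * ((V k)ᵀ * V k)⁻¹)
    (hVrec : ∀ k, V (k + 1) = Wbarᵀ * U (k + 1) * ((U (k + 1))ᵀ * U (k + 1))⁻¹)
    (hwarm : colSpace (V 0) ⊓ Submodule.span ℝ
        {v : Fin n → ℝ | ∃ j : Fin n, r ≤ (j : ℕ) ∧ v = fun i => Vsv i j} = ⊥) :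
    (∃ C > (0 : ℝ), ∀ k : ℕ,
      froSq (U k * (V k)ᵀ - Usv * (Matrix.of fun (i : Fin m) (j : Fin n) =>
          if (i : ℕ) = (j : ℕ) ∧ (i : ℕ) < r then σ ((i : ℕ) + 1) else 0) * Vsvᵀ)
        ≤ C * (σ (r + 1) / σ r) ^ (2 * k))
    ∧ Filter.Tendsto
        (fun k : ℕ => U k * (V k)ᵀ)
        Filter.atTop
        (nhds (Usv * (Matrix.of fun (i : Fin m) (j : Fin n) =>
          if (i : ℕ) = (j : ℕ) ∧ (i : ℕ) < r then σ ((i : ℕ) + 1) else 0) * Vsvᵀ)) := by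
  have hrm : r ≤ m := le_trans hr (min_le_left _ _)
  have hrn : r ≤ n := le_trans hr (min_le_right _ _)
  have hUU : Usv * Usvᵀ = 1 := mul_eq_one_comm.mp hUsv
  have hVV : Vsv * Vsvᵀ = 1 := mul_eq_one_comm.mp hVsv
  set Sig : Matrix (Fin m) (Fin n) ℝ := Matrix.of fun (i : Fin m) (j : Fin n) =>
    if (i : ℕ) = (j : ℕ) then σ ((i : ℕ) + 1) else 0 with hSigdef
  set Sr : Matrix (Fin m) (Fin n) ℝ := Matrix.of fun (i : Fin m) (j : Fin n) =>
    if (i : ℕ) = (j : ℕ) ∧ (i : ℕ) < r then σ ((i : ℕ) + 1) else 0 with hSrdef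
  set ρ : ℝ := σ (r + 1) / σ r with hρdef
  have hσr : 0 < σ r := lt_of_le_of_lt (hσnonneg (r+1)) hgap
  have hanti : Antitone σ := antitone_nat_of_succ_le hσmono
  have hρ0 : 0 ≤ ρ := div_nonneg (hσnonneg _) hσr.le
  have hρ1 : ρ < 1 := (div_lt_one hσr).mpr hgap
  -- Frobenius invariance
  have froSq_eq_frob : ∀ (X : Matrix (Fin m) (Fin n) ℝ), froSq X = frob X := by
    intro X; rw [froSq, ← frob_eq_trace]
  have hinv : ∀ A : Matrix (Fin m) (Fin n) ℝ, frob (Usv * A * Vsvᵀ) = frob A := by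
    intro A
    rw [frob_eq_trace (Usv * A * Vsvᵀ), frob_eq_trace A]
    have h1 : (Usv*A*Vsvᵀ)ᵀ*(Usv*A*Vsvᵀ) = Vsv*(Aᵀ*A)*Vsvᵀ := by
      simp only [Matrix.transpose_mul, Matrix.transpose_transpose]
      calc Vsv*(Aᵀ*Usvᵀ)*(Usv*A*Vsvᵀ) = Vsv*(Aᵀ*((Usvᵀ*Usv)*(A*Vsvᵀ))) := by
            simp only [Matrix.mul_assoc]
        _ = Vsv*(Aᵀ*A)*Vsvᵀ := by rw [hUsv, Matrix.one_mul]; simp only [Matrix.mul_assoc]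
    rw [h1, Matrix.trace_mul_cycle, hVsv, Matrix.one_mul]
  -- warm start: top block of Vsvᵀ V 0 invertible
  set Vt0 : Matrix (Fin n) (Fin r) ℝ := Vsvᵀ * V 0 with hVt0def
  set X0 : Matrix (Fin r) (Fin r) ℝ :=
    Matrix.of (fun l l' => Vt0 (Fin.castLE hrn l) l') with hX0def
  have hX0 : IsUnit X0 := by
    rw [Matrix.isUnit_iff_isUnit_det, isUnit_iff_ne_zero]
    intro hdet0
    obtain ⟨c, hc0, hc⟩ := Matrix.exists_mulVec_eq_zero_iff.mpr hdet0
    set w := (V 0).mulVec c with hwdef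
    have hw0 : w ≠ 0 := by
      intro h
      apply hc0
      have h1 : ((V 0)ᵀ * V 0).mulVec c = 0 := by
        rw [← Matrix.mulVec_mulVec, ← hwdef, h, Matrix.mulVec_zero]
      have hGv := (Matrix.isUnit_iff_isUnit_det _).mp (hVGram 0)
      have h2 := congrArg (fun x => ((((V 0)ᵀ * V 0)⁻¹)).mulVec x) h1
      simpa [Matrix.mulVec_mulVec, Matrix.nonsing_inv_mul _ hGv] using h2
    have hw1 : w ∈ colSpace (V 0) := by
      have hsum : w = ∑ l, c l • (V 0)ᵀ l := by
        funext i
        simp only [Matrix.mulVec, dotProduct, hwdef, Finset.sum_apply, Pi.smul_apply,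
          Matrix.transpose_apply, smul_eq_mul]
        exact Finset.sum_congr rfl fun l _ => mul_comm _ _
      rw [hsum]
      exact Submodule.sum_mem _ fun l _ =>
        Submodule.smul_mem _ _ (Submodule.subset_span ⟨l, rfl⟩)
    have hw2 : w ∈ Submodule.span ℝ
        {v : Fin n → ℝ | ∃ j : Fin n, r ≤ (j : ℕ) ∧ v = fun i => Vsv i j} := by
      set y := Vt0.mulVec c with hydef
      have hy : ∀ j : Fin n, (j : ℕ) < r → y j = 0 := by
        intro j hj
        have h3 : y j = X0.mulVec c ⟨(j : ℕ), hj⟩ := by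
          simp only [hydef, Matrix.mulVec, dotProduct, hX0def, Matrix.of_apply]
          congr 1
        rw [h3, hc]; rfl
      have hVw : w = Vsv.mulVec y := by
        rw [hydef, hVt0def, Matrix.mulVec_mulVec, ← Matrix.mul_assoc, hVV, Matrix.one_mul]
      have hsum : w = ∑ j, y j • (fun i => Vsv i j) := by
        funext i
        simp only [hVw, Matrix.mulVec, dotProduct, Finset.sum_apply, Pi.smul_apply,
          smul_eq_mul]
        exact Finset.sum_congr rfl fun l _ => mul_comm _ _
      rw [hsum]
      apply Submodule.sum_mem
      intro j _
      by_cases hj : r ≤ (j : ℕ)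
      · exact Submodule.smul_mem _ _ (Submodule.subset_span ⟨j, hj, rfl⟩)
      · rw [hy j (not_le.mp hj), zero_smul]
        exact Submodule.zero_mem _
    have hwmem : w ∈ (⊥ : Submodule ℝ (Fin n → ℝ)) := by
      rw [← hwarm]
      exact Submodule.mem_inf.mpr ⟨hw1, hw2⟩
    exact hw0 ((Submodule.mem_bot ℝ).mp hwmem)
  -- iteration formulas
  have hVform : ∀ k, ∃ R : Matrix (Fin r) (Fin r) ℝ, IsUnit R ∧
      Vsvᵀ * V k = (Sigᵀ * Sig)^k * Vt0 * R := by
    intro k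
    induction k with
    | zero => exact ⟨1, isUnit_one, by simp [hVt0def]⟩
    | succ k ih =>
      obtain ⟨R, hR, hV⟩ := ih
      have hGv := hVGram k
      have hGu := hUGram k
      have step1 : Usvᵀ * U (k+1) = Sig * (Vsvᵀ * V k) * ((V k)ᵀ * V k)⁻¹ := by
        rw [hUrec k, hW]
        simp only [← Matrix.mul_assoc]
        rw [hUsv, Matrix.one_mul]
      have step2 : Vsvᵀ * V (k+1) =
          (Sigᵀ * Sig) * (Vsvᵀ * V k) * (((V k)ᵀ * V k)⁻¹ * ((U (k+1))ᵀ * U (k+1))⁻¹) := by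
        rw [hVrec k]
        calc Vsvᵀ * (Wbarᵀ * U (k+1) * ((U (k+1))ᵀ * U (k+1))⁻¹)
            = (Vsvᵀ * Vsv) * Sigᵀ * ((Usvᵀ * U (k+1)) * ((U (k+1))ᵀ * U (k+1))⁻¹) := by
              rw [hW]
              simp only [Matrix.transpose_mul, Matrix.transpose_transpose, Matrix.mul_assoc]
          _ = Sigᵀ * (Sig * (Vsvᵀ * V k) * ((V k)ᵀ * V k)⁻¹ * ((U (k+1))ᵀ * U (k+1))⁻¹) := by
              rw [hVsv, Matrix.one_mul, step1, Matrix.mul_assoc]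
          _ = (Sigᵀ * Sig) * (Vsvᵀ * V k) * (((V k)ᵀ * V k)⁻¹ * ((U (k+1))ᵀ * U (k+1))⁻¹) := by
              simp only [Matrix.mul_assoc]
      refine ⟨R * (((V k)ᵀ * V k)⁻¹ * ((U (k+1))ᵀ * U (k+1))⁻¹),
        hR.mul ((Matrix.isUnit_nonsing_inv_iff.mpr hGv).mul
          (Matrix.isUnit_nonsing_inv_iff.mpr hGu)), ?_⟩
      rw [step2, hV, pow_succ']
      simp only [Matrix.mul_assoc]
  have hUform : ∀ k, ∃ R : Matrix (Fin r) (Fin r) ℝ, IsUnit R ∧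
      Usvᵀ * U (k+1) = Sig * (Sigᵀ * Sig)^k * Vt0 * R := by
    intro k
    obtain ⟨R, hR, hV⟩ := hVform k
    have hGv := hVGram k
    have step1 : Usvᵀ * U (k+1) = Sig * (Vsvᵀ * V k) * ((V k)ᵀ * V k)⁻¹ := by
      rw [hUrec k, hW]
      simp only [← Matrix.mul_assoc]
      rw [hUsv, Matrix.one_mul]
    refine ⟨R * ((V k)ᵀ * V k)⁻¹,
      hR.mul (Matrix.isUnit_nonsing_inv_iff.mpr hGv), ?_⟩
    rw [step1, hV]
    simp only [Matrix.mul_assoc]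
  -- diagonal structure
  have hSS : Sigᵀ * Sig = Matrix.diagonal
      (fun j : Fin n => if (j : ℕ) < m then (σ ((j : ℕ) + 1))^2 else 0) := by
    ext j j'
    simp only [Matrix.mul_apply, Matrix.transpose_apply, Matrix.diagonal_apply, hSigdef,
      Matrix.of_apply]
    have hterm : ∀ i : Fin m,
        (if (i:ℕ) = (j:ℕ) then σ ((i:ℕ)+1) else 0) * (if (i:ℕ) = (j':ℕ) then σ ((i:ℕ)+1) else 0)
        = if (j:ℕ) = (i:ℕ) then (if (i:ℕ) = (j':ℕ) then (σ ((i:ℕ)+1))^2 else 0) else 0 := by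
      intro i
      by_cases h1 : (i:ℕ) = (j:ℕ) <;> by_cases h2 : (i:ℕ) = (j':ℕ) <;>
        simp [h1, h2, eq_comm, sq]
    rw [Finset.sum_congr rfl (fun i _ => hterm i), sum_if_eq]
    by_cases hjm : (j:ℕ) < m
    · rw [dif_pos hjm]
      by_cases hjj : j = j'
      · subst hjj; simp [hjm]
      · have hne : ¬ ((j:ℕ) = (j':ℕ)) := fun hv => hjj (Fin.ext hv)
        simp [hne, hjj]
    · rw [dif_neg hjm]
      by_cases hjj : j = j'
      · subst hjj; simp [hjm]
      · simp [hjj]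
  -- fixed auxiliary matrices
  have hσl : ∀ l : Fin r, 0 < σ ((l:ℕ)+1) := by
    intro l
    exact lt_of_lt_of_le hσr (hanti (by omega : (l:ℕ)+1 ≤ r))
  set D1 : Matrix (Fin r) (Fin r) ℝ := Matrix.diagonal (fun l : Fin r => σ ((l:ℕ)+1)) with hD1def
  set Nm : Matrix (Fin m) (Fin r) ℝ :=
    Matrix.of (fun i l => if (i:ℕ) = (l:ℕ) then (1:ℝ) else 0) with hNmdef
  set Nn : Matrix (Fin n) (Fin r) ℝ :=
    Matrix.of (fun j l => if (j:ℕ) = (l:ℕ) then (1:ℝ) else 0) with hNndef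
  set G : Matrix (Fin n) (Fin r) ℝ := Vt0 * X0⁻¹ with hGdef
  set Gm : Matrix (Fin m) (Fin r) ℝ :=
    Matrix.of (fun i l => if h : (i:ℕ) < n then G ⟨(i:ℕ), h⟩ l else 0) with hGmdef
  set St : Matrix (Fin m) (Fin n) ℝ := Sig - Sr with hStdef
  have hNN : Nmᵀ * Nm = 1 := by
    ext l l'
    simp only [Matrix.mul_apply, Matrix.transpose_apply, hNmdef, Matrix.of_apply]
    have hterm : ∀ i : Fin m,
        (if (i:ℕ) = (l:ℕ) then (1:ℝ) else 0) * (if (i:ℕ) = (l':ℕ) then (1:ℝ) else 0)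
        = if (l:ℕ) = (i:ℕ) then (if (i:ℕ) = (l':ℕ) then (1:ℝ) else 0) else 0 := by
      intro i
      by_cases h1 : (i:ℕ) = (l:ℕ) <;> by_cases h2 : (i:ℕ) = (l':ℕ) <;> simp [h1, h2, eq_comm]
    rw [Finset.sum_congr rfl (fun i _ => hterm i), sum_if_eq,
      dif_pos (lt_of_lt_of_le l.isLt hrm)]
    rw [Matrix.one_apply]
    by_cases hll : l = l'
    · subst hll; simp
    · have hne : ¬ ((l:ℕ) = (l':ℕ)) := fun hv => hll (Fin.ext hv)
      simp [hne, hll]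
  have hSrNN : Sr = Nm * (D1 * Nnᵀ) := by
    ext i j
    rw [Matrix.mul_apply]
    have hterm : ∀ l : Fin r, Nm i l * (D1 * Nnᵀ) l j
        = if (i:ℕ) = (l:ℕ) then (σ ((l:ℕ)+1) * if (j:ℕ) = (l:ℕ) then (1:ℝ) else 0) else 0 := by
      intro l
      rw [hD1def, Matrix.diagonal_mul, Matrix.transpose_apply, hNmdef, hNndef]
      simp only [Matrix.of_apply]
      by_cases h1 : (i:ℕ) = (l:ℕ) <;> simp [h1]
    rw [Finset.sum_congr rfl (fun l _ => hterm l), sum_if_eq]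
    rw [hSrdef]
    simp only [Matrix.of_apply]
    by_cases hir : (i:ℕ) < r
    · rw [dif_pos hir]
      by_cases hij : (i:ℕ) = (j:ℕ)
      · rw [if_pos (show (j:ℕ) = (((⟨(i:ℕ), hir⟩ : Fin r)):ℕ) from hij.symm), mul_one,
          if_pos ⟨hij, hir⟩]
      · have : ¬ ((j:ℕ) = (i:ℕ)) := fun hv => hij hv.symm
        simp [hij, hir, this]
    · rw [dif_neg hir]
      simp [hir]
  have hSt : ∀ i j, St i j = if ((i:ℕ) = (j:ℕ) ∧ ¬ ((i:ℕ) < r)) then σ ((i:ℕ)+1) else 0 := by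
    intro i j
    rw [hStdef, Matrix.sub_apply, hSigdef, hSrdef]
    simp only [Matrix.of_apply]
    by_cases h1 : (i:ℕ) = (j:ℕ)
    · by_cases h2 : (i:ℕ) < r
      · have h2' : (j:ℕ) < r := h1 ▸ h2
        simp [h1, h2, h2', not_le.mpr h2']
      · have h2' : ¬ (j:ℕ) < r := h1 ▸ h2
        simp [h1, h2, h2', not_lt.mp h2']
    · simp [h1]
  set c3 : ℝ := 2 * r * frob St + 2 * ((m:ℝ) - r) * frob (D1 * Nnᵀ) with hc3def
  have hmr : (0:ℝ) ≤ (m:ℝ) - r := by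
    have : (r:ℝ) ≤ m := Nat.cast_le.mpr hrm
    linarith
  have hc3 : 0 ≤ c3 := by
    have h1 := frob_nonneg St
    have h2 := frob_nonneg (D1 * Nnᵀ)
    have : (0:ℝ) ≤ (r:ℝ) := Nat.cast_nonneg r
    rw [hc3def]
    nlinarith
  have key : ∀ K : ℕ,
      frob (U (K+1) * (V (K+1))ᵀ - Usv * Sr * Vsvᵀ) ≤ (frob Gm * c3) * ρ^(2*(K+1)) := by
    intro K
    obtain ⟨R, hR, hUf⟩ := hUform K
    set A : Matrix (Fin m) (Fin r) ℝ := Sig * (Sigᵀ*Sig)^K * Vt0 with hAdef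
    have hA : ∀ (i : Fin m) (l : Fin r), A i l =
        if h : (i:ℕ) < n then σ ((i:ℕ)+1)^(2*K+1) * Vt0 ⟨(i:ℕ), h⟩ l else 0 := by
      intro i l
      have hfac : ∀ j : Fin n, (Sig * (Sigᵀ*Sig)^K) i j =
          if (i:ℕ) = (j:ℕ) then σ ((i:ℕ)+1)^(2*K+1) else 0 := by
        intro j
        rw [hSS, Matrix.diagonal_pow, Matrix.mul_diagonal]
        simp only [hSigdef, Matrix.of_apply, Pi.pow_apply]
        by_cases h1 : (i:ℕ) = (j:ℕ)
        · rw [if_pos h1, if_pos h1]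
          have hjm : (j:ℕ) < m := h1 ▸ i.isLt
          rw [if_pos hjm, ← h1, ← pow_mul, pow_succ']
        · rw [if_neg h1, if_neg h1, zero_mul]
      rw [hAdef, Matrix.mul_apply]
      rw [Finset.sum_congr rfl (fun j _ => by rw [hfac j])]
      simp only [ite_mul, zero_mul]
      rw [sum_if_eq]
    set E1 : Matrix (Fin r) (Fin r) ℝ :=
      Matrix.diagonal (fun l : Fin r => σ ((l:ℕ)+1)^(2*K+1)) with hE1def
    have hE1mul : E1 * Matrix.diagonal (fun l : Fin r => (σ ((l:ℕ)+1)^(2*K+1))⁻¹) = 1 := by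
      rw [hE1def, Matrix.diagonal_mul_diagonal]
      rw [show (fun l : Fin r => σ ((l:ℕ)+1)^(2*K+1) * (σ ((l:ℕ)+1)^(2*K+1))⁻¹)
          = fun _ => (1:ℝ) from funext fun l =>
            mul_inv_cancel₀ (pow_ne_zero _ (hσl l).ne')]
      exact Matrix.diagonal_one
    have hE1unit : IsUnit E1 := by
      rw [Matrix.isUnit_iff_isUnit_det, hE1def, Matrix.det_diagonal, isUnit_iff_ne_zero]
      exact Finset.prod_ne_zero_iff.mpr (fun l _ => pow_ne_zero _ (hσl l).ne')
    set Mm : Matrix (Fin m) (Fin r) ℝ := A * X0⁻¹ * E1⁻¹ with hMdef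
    have hX0X : X0 * X0⁻¹ = 1 :=
      Matrix.mul_nonsing_inv _ ((Matrix.isUnit_iff_isUnit_det _).mp hX0)
    have hXX0 : X0⁻¹ * X0 = 1 :=
      Matrix.nonsing_inv_mul _ ((Matrix.isUnit_iff_isUnit_det _).mp hX0)
    have hE1E : E1⁻¹ * E1 = 1 :=
      Matrix.nonsing_inv_mul _ ((Matrix.isUnit_iff_isUnit_det _).mp hE1unit)
    have hE1inv : E1⁻¹ = Matrix.diagonal (fun l : Fin r => (σ ((l:ℕ)+1)^(2*K+1))⁻¹) :=
      Matrix.inv_eq_right_inv hE1mul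
    have hM : ∀ (i : Fin m) (l : Fin r), Mm i l =
        (if h : (i:ℕ) < n then σ ((i:ℕ)+1)^(2*K+1) * G ⟨(i:ℕ), h⟩ l else 0)
          * (σ ((l:ℕ)+1)^(2*K+1))⁻¹ := by
      intro i l
      have hAX : ∀ l', (A * X0⁻¹) i l' =
          if h : (i:ℕ) < n then σ ((i:ℕ)+1)^(2*K+1) * G ⟨(i:ℕ),h⟩ l' else 0 := by
        intro l'
        rw [Matrix.mul_apply]
        by_cases h : (i:ℕ) < n
        · rw [dif_pos h, hGdef, Matrix.mul_apply, Finset.mul_sum]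
          apply Finset.sum_congr rfl
          intro t _
          rw [hA, dif_pos h]; ring
        · rw [dif_neg h]
          apply Finset.sum_eq_zero; intro t _
          rw [hA, dif_neg h, zero_mul]
      rw [hMdef, hE1inv, Matrix.mul_diagonal, hAX]
    -- the perturbation T
    set T : Matrix (Fin m) (Fin r) ℝ := Mm - Nm with hTdef
    have hMN : ∀ (i : Fin m) (l : Fin r), (i:ℕ) < r → Mm i l = Nm i l := by
      intro i l hir
      have hin : (i:ℕ) < n := lt_of_lt_of_le hir hrn
      rw [hM, dif_pos hin]
      have hGtop : G ⟨(i:ℕ), hin⟩ l = if (i:ℕ) = (l:ℕ) then 1 else 0 := by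
        have h1 : (⟨(i:ℕ), hin⟩ : Fin n) = Fin.castLE hrn ⟨(i:ℕ), hir⟩ := by
          ext; simp [Fin.castLE]
        have h2 : ∀ t, Vt0 (Fin.castLE hrn ⟨(i:ℕ), hir⟩) t = X0 ⟨(i:ℕ), hir⟩ t :=
          fun t => rfl
        rw [h1, hGdef, Matrix.mul_apply]
        rw [Finset.sum_congr rfl (fun t _ => by rw [h2])]
        rw [← Matrix.mul_apply, hX0X, Matrix.one_apply]
        by_cases h3 : (⟨(i:ℕ), hir⟩ : Fin r) = l
        · rw [if_pos h3, if_pos (show (i:ℕ) = (l:ℕ) from by rw [← h3])]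
        · rw [if_neg h3, if_neg (fun hv => h3 (Fin.ext hv))]
      rw [hGtop]
      by_cases h4 : (i:ℕ) = (l:ℕ)
      · rw [if_pos h4, mul_one, hNmdef]
        simp only [Matrix.of_apply]
        rw [if_pos h4, h4]
        exact mul_inv_cancel₀ (pow_ne_zero _ (hσl l).ne')
      · rw [if_neg h4, mul_zero, zero_mul, hNmdef]
        simp [h4]
    have hT0 : ∀ (i : Fin m) (l : Fin r), (i:ℕ) < r → T i l = 0 := by
      intro i l h; rw [hTdef, Matrix.sub_apply, hMN i l h, sub_self]
    have hMNT : Mm = Nm + T := by rw [hTdef]; abel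
    have hNT : Nmᵀ * T = 0 := by
      ext l j
      rw [Matrix.mul_apply, Matrix.zero_apply]
      apply Finset.sum_eq_zero; intro i _
      rw [Matrix.transpose_apply, hNmdef]
      simp only [Matrix.of_apply]
      by_cases h : (i:ℕ) = (l:ℕ)
      · rw [hT0 i j (h ▸ l.isLt), mul_zero]
      · rw [if_neg h, zero_mul]
    -- entrywise bound on T
    have hTbd : ∀ (i : Fin m) (l : Fin r), (T i l)^2 ≤ ((ρ^(2*K+1)) • Gm) i l ^2 := by
      intro i l
      rw [Matrix.smul_apply, smul_eq_mul, mul_pow]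
      by_cases hir : (i:ℕ) < r
      · rw [hT0 i l hir]
        simpa using mul_nonneg (sq_nonneg (ρ^(2*K+1))) (sq_nonneg (Gm i l))
      · have hNm0 : Nm i l = 0 := by
          rw [hNmdef]; simp only [Matrix.of_apply]
          rw [if_neg (fun h => hir (lt_of_le_of_lt (le_of_eq h) l.isLt))]
        rw [hTdef, Matrix.sub_apply, hNm0, sub_zero, hM]
        by_cases hin : (i:ℕ) < n
        · rw [dif_pos hin]
          have hGm : Gm i l = G ⟨(i:ℕ), hin⟩ l := by
            rw [hGmdef]; simp only [Matrix.of_apply]; rw [dif_pos hin]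
          rw [hGm]
          have hx0 : 0 ≤ σ ((i:ℕ)+1)^(2*K+1) * (σ ((l:ℕ)+1)^(2*K+1))⁻¹ :=
            mul_nonneg (pow_nonneg (hσnonneg _) _) (inv_nonneg.mpr (pow_nonneg (hσnonneg _) _))
          have hx1 : σ ((i:ℕ)+1)^(2*K+1) * (σ ((l:ℕ)+1)^(2*K+1))⁻¹ ≤ ρ^(2*K+1) := by
            have h5 : σ ((i:ℕ)+1) / σ ((l:ℕ)+1) ≤ ρ := by
              rw [hρdef]
              exact div_le_div₀ (hσnonneg _) (hanti (by omega : r+1 ≤ (i:ℕ)+1)) hσr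
                (hanti (by omega : (l:ℕ)+1 ≤ r))
            calc σ ((i:ℕ)+1)^(2*K+1) * (σ ((l:ℕ)+1)^(2*K+1))⁻¹
                = (σ ((i:ℕ)+1) / σ ((l:ℕ)+1))^(2*K+1) := by
                  rw [div_pow, div_eq_mul_inv]
              _ ≤ ρ^(2*K+1) := pow_le_pow_left₀ (div_nonneg (hσnonneg _) (hσnonneg _)) h5 _
          have harr : σ ((i:ℕ)+1)^(2*K+1) * G ⟨(i:ℕ),hin⟩ l * (σ ((l:ℕ)+1)^(2*K+1))⁻¹
              = (σ ((i:ℕ)+1)^(2*K+1) * (σ ((l:ℕ)+1)^(2*K+1))⁻¹) * G ⟨(i:ℕ),hin⟩ l := by ring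
          rw [harr, mul_pow]
          exact mul_le_mul_of_nonneg_right (pow_le_pow_left₀ hx0 hx1 2) (sq_nonneg _)
        · rw [dif_neg hin, zero_mul]
          simpa using mul_nonneg (sq_nonneg (ρ^(2*K+1))) (sq_nonneg (Gm i l))
    have hfrobT : frob T ≤ (ρ^(2*K+1))^2 * frob Gm := by
      calc frob T ≤ frob ((ρ^(2*K+1)) • Gm) := frob_entry_le _ _ hTbd
        _ = (ρ^(2*K+1))^2 * frob Gm := frob_smul _ _
    -- gram and projection
    have hUt : Usvᵀ * U (K+1) = Mm * (E1 * (X0 * R)) := by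
      rw [hUf]
      have h6 : A*X0⁻¹*E1⁻¹*(E1*(X0*R)) = A*R := by
        calc A*X0⁻¹*E1⁻¹*(E1*(X0*R)) = A*(X0⁻¹*((E1⁻¹*E1)*(X0*R))) := by
              simp only [Matrix.mul_assoc]
          _ = A*(X0⁻¹*(X0*R)) := by rw [hE1E, Matrix.one_mul]
          _ = A*R := by rw [← Matrix.mul_assoc X0⁻¹, hXX0, Matrix.one_mul]
      rw [hMdef, h6, hAdef]
    have hQunit : IsUnit (E1 * (X0 * R)) := hE1unit.mul (hX0.mul hR)
    have hgramUt : (Usvᵀ * U (K+1))ᵀ * (Usvᵀ * U (K+1)) = (U (K+1))ᵀ * U (K+1) := by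
      rw [Matrix.transpose_mul, Matrix.transpose_transpose]
      calc (U (K+1))ᵀ * Usv * (Usvᵀ * U (K+1))
          = (U (K+1))ᵀ * ((Usv * Usvᵀ) * U (K+1)) := by simp only [Matrix.mul_assoc]
        _ = _ := by rw [hUU, Matrix.one_mul]
    have hMQgram : IsUnit ((Mm * (E1*(X0*R)))ᵀ * (Mm * (E1*(X0*R)))) := by
      rw [← hUt, hgramUt]; exact hUGram K
    obtain ⟨hMMunit, hproj⟩ := proj_right_inv Mm (E1*(X0*R)) hQunit hMQgram
    set Pm : Matrix (Fin m) (Fin m) ℝ := Mm * (Mmᵀ * Mm)⁻¹ * Mmᵀ with hPmdef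
    obtain ⟨hfP1, hfMK, hPMM⟩ := proj_facts Mm Nm T hMNT hNN hNT hMMunit
    have hPmeq : (Usvᵀ * U (K+1)) * ((Usvᵀ * U (K+1))ᵀ * (Usvᵀ * U (K+1)))⁻¹
        * (Usvᵀ * U (K+1))ᵀ = Pm := by
      rw [hUt, hPmdef]; exact hproj
    -- projection expression for the iterate
    have h6 : (V (K+1))ᵀ = ((U (K+1))ᵀ * U (K+1))⁻¹ * ((U (K+1))ᵀ * Wbar) := by
      rw [hVrec K]
      simp only [Matrix.transpose_mul, Matrix.transpose_nonsing_inv,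
        Matrix.transpose_transpose, Matrix.mul_assoc]
    have hUVcore : ∀ (Uk : Matrix (Fin m) (Fin r) ℝ),
        (Usvᵀ*Uk)ᵀ*(Usvᵀ*Uk) = Ukᵀ*Uk →
        Uk * ((Ukᵀ*Uk)⁻¹ * (Ukᵀ * (Usv*Sig*Vsvᵀ))) =
        Usv * ((Usvᵀ*Uk) * ((Usvᵀ*Uk)ᵀ*(Usvᵀ*Uk))⁻¹ * (Usvᵀ*Uk)ᵀ * Sig) * Vsvᵀ := by
      intro Uk hg
      rw [hg]
      simp only [Matrix.transpose_mul, Matrix.transpose_transpose]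
      simp only [← Matrix.mul_assoc]
      rw [hUU, Matrix.one_mul]
    have hUV : U (K+1) * (V (K+1))ᵀ = Usv * (Pm * Sig) * Vsvᵀ := by
      rw [h6]
      have h7 := hUVcore (U (K+1)) hgramUt
      rw [hW]
      rw [h7, hPmeq]
    have herr : U (K+1) * (V (K+1))ᵀ - Usv * Sr * Vsvᵀ = Usv * (Pm * Sig - Sr) * Vsvᵀ := by
      rw [hUV, Matrix.mul_sub, Matrix.sub_mul]
    rw [herr, hinv]
    -- decomposition of the error
    have hMSt : Mmᵀ * St = Tᵀ * St := by
      rw [hMNT, Matrix.transpose_add, Matrix.add_mul]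
      have hNSt : Nmᵀ * St = 0 := by
        ext l j
        rw [Matrix.mul_apply, Matrix.zero_apply]
        apply Finset.sum_eq_zero; intro i _
        rw [Matrix.transpose_apply, hNmdef]
        simp only [Matrix.of_apply]
        by_cases h : (i:ℕ) = (l:ℕ)
        · rw [if_pos h, one_mul, hSt i j,
            if_neg (fun hco => hco.2 (lt_of_le_of_lt (le_of_eq h) l.isLt))]
        · rw [if_neg h, zero_mul]
      rw [hNSt, zero_add]
    have hPm1N : (Pm - 1) * Nm = -((Pm - 1) * T) := by
      have h7 : (Pm - 1) * Mm = 0 := by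
        rw [Matrix.sub_mul, hPmdef, hPMM, Matrix.one_mul, sub_self]
      have h8 : Nm = Mm - T := by rw [hMNT]; abel
      rw [h8, Matrix.mul_sub, h7, zero_sub]
    have hSig_split : Sig = Sr + St := by rw [hStdef]; abel
    have hEdecomp : Pm * Sig - Sr =
        (Mm * (Mmᵀ*Mm)⁻¹) * (Tᵀ * St) - (Pm - 1) * (T * (D1 * Nnᵀ)) := by
      calc Pm * Sig - Sr = Pm * (Sr + St) - Sr := by rw [← hSig_split]
        _ = (Pm - 1) * Sr + Pm * St := by
            rw [Matrix.mul_add, Matrix.sub_mul, Matrix.one_mul]; abel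
        _ = (Pm - 1) * (Nm * (D1 * Nnᵀ)) + (Mm * (Mmᵀ*Mm)⁻¹) * (Mmᵀ * St) := by
            rw [← hSrNN, hPmdef, Matrix.mul_assoc (Mm * (Mmᵀ*Mm)⁻¹)]
        _ = (Mm * (Mmᵀ*Mm)⁻¹) * (Tᵀ * St) - (Pm - 1) * (T * (D1 * Nnᵀ)) := by
            rw [← Matrix.mul_assoc (Pm - 1), hPm1N, hMSt]
            simp only [Matrix.neg_mul, Matrix.mul_assoc]
            abel
    -- norm bounds
    have hfMK' : frob (Mm * (Mmᵀ*Mm)⁻¹) ≤ (r:ℝ) := by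
      simpa using hfMK
    have hfP1' : frob (Pm - 1) = (m:ℝ) - r := by
      rw [hPmdef]
      simpa using hfP1
    have hb1 : frob ((Mm * (Mmᵀ*Mm)⁻¹) * (Tᵀ * St)) ≤ (r:ℝ) * (frob T * frob St) := by
      calc frob ((Mm * (Mmᵀ*Mm)⁻¹) * (Tᵀ * St))
          ≤ frob (Mm * (Mmᵀ*Mm)⁻¹) * frob (Tᵀ * St) := frob_mul_le _ _
        _ ≤ (r:ℝ) * (frob T * frob St) := by
            have h9 : frob (Tᵀ * St) ≤ frob T * frob St := by
              have := frob_mul_le Tᵀ St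
              rwa [frob_transpose] at this
            exact mul_le_mul hfMK' h9 (frob_nonneg _)
              (Nat.cast_nonneg r)
    have hb2 : frob ((Pm - 1) * (T * (D1 * Nnᵀ))) ≤
        ((m:ℝ) - r) * (frob T * frob (D1 * Nnᵀ)) := by
      calc frob ((Pm - 1) * (T * (D1 * Nnᵀ)))
          ≤ frob (Pm - 1) * frob (T * (D1 * Nnᵀ)) := frob_mul_le _ _
        _ ≤ ((m:ℝ) - r) * (frob T * frob (D1 * Nnᵀ)) := by
            rw [hfP1']
            exact mul_le_mul_of_nonneg_left (frob_mul_le _ _) hmr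
    have hTn := frob_nonneg T
    have hGmn := frob_nonneg Gm
    calc frob (Pm * Sig - Sr)
        ≤ 2 * frob ((Mm * (Mmᵀ*Mm)⁻¹) * (Tᵀ * St))
          + 2 * frob ((Pm - 1) * (T * (D1 * Nnᵀ))) := by
          rw [hEdecomp]; exact frob_sub_le _ _
      _ ≤ 2 * ((r:ℝ) * (frob T * frob St))
          + 2 * (((m:ℝ) - r) * (frob T * frob (D1 * Nnᵀ))) := by linarith
      _ = frob T * c3 := by rw [hc3def]; ring
      _ ≤ ((ρ^(2*K+1))^2 * frob Gm) * c3 := mul_le_mul_of_nonneg_right hfrobT hc3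
      _ = (frob Gm * c3) * (ρ^(2*K+1))^2 := by ring
      _ ≤ (frob Gm * c3) * ρ^(2*(K+1)) := by
          apply mul_le_mul_of_nonneg_left ?_ (mul_nonneg hGmn hc3)
          have h10 : (ρ^(2*K+1))^2 = ρ^(2*(K+1)) * ρ^(2*K) := by
            rw [← pow_mul, ← pow_add]
            congr 1
            omega
          rw [h10]
          calc ρ^(2*(K+1)) * ρ^(2*K) ≤ ρ^(2*(K+1)) * 1 :=
                mul_le_mul_of_nonneg_left (pow_le_one₀ hρ0 hρ1.le) (pow_nonneg hρ0 _)
            _ = ρ^(2*(K+1)) := mul_one _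
  set Cb : ℝ := frob (U 0 * (V 0)ᵀ - Usv * Sr * Vsvᵀ) + frob Gm * c3 + 1 with hCbdef
  have hGmc3 : 0 ≤ frob Gm * c3 := mul_nonneg (frob_nonneg Gm) hc3
  have hfr0 : 0 ≤ frob (U 0 * (V 0)ᵀ - Usv * Sr * Vsvᵀ) := frob_nonneg _
  have hCb0 : 0 < Cb := by rw [hCbdef]; linarith
  have hboundall : ∀ k : ℕ,
      froSq (U k * (V k)ᵀ - Usv * Sr * Vsvᵀ) ≤ Cb * ρ^(2*k) := by
    intro k
    rw [froSq_eq_frob]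
    cases k with
    | zero =>
      simp only [Nat.mul_zero, pow_zero, mul_one]
      rw [hCbdef]
      linarith
    | succ K =>
      have h1 := key K
      have h2 : (0:ℝ) ≤ ρ^(2*(K+1)) := pow_nonneg hρ0 _
      have h3 : (frob Gm * c3) * ρ^(2*(K+1)) ≤ Cb * ρ^(2*(K+1)) := by
        apply mul_le_mul_of_nonneg_right _ h2
        rw [hCbdef]; linarith
      linarith
  refine ⟨⟨Cb, hCb0, hboundall⟩, ?_⟩
  -- convergence
  have hρ2 : Filter.Tendsto (fun k : ℕ => Cb * ρ^(2*k)) Filter.atTop (nhds 0) := by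
    have h1 : Filter.Tendsto (fun k : ℕ => (ρ^2)^k) Filter.atTop (nhds 0) := by
      apply tendsto_pow_atTop_nhds_zero_of_lt_one (sq_nonneg ρ)
      nlinarith
    have h2 := h1.const_mul Cb
    rw [mul_zero] at h2
    convert h2 using 2 with k
    rw [← pow_mul, mul_comm 2 k, pow_mul]
  refine tendsto_pi_nhds.mpr ?_
  intro i
  rw [tendsto_pi_nhds]
  intro j
  have hsq : Filter.Tendsto
      (fun k : ℕ => ((U k * (V k)ᵀ - Usv * Sr * Vsvᵀ) i j)^2) Filter.atTop (nhds 0) := by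
    apply squeeze_zero (fun k => sq_nonneg _) (fun k => ?_) hρ2
    calc ((U k * (V k)ᵀ - Usv * Sr * Vsvᵀ) i j)^2
        ≤ frob (U k * (V k)ᵀ - Usv * Sr * Vsvᵀ) := sq_le_frob _ i j
      _ ≤ Cb * ρ^(2*k) := by rw [← froSq_eq_frob]; exact hboundall k
  have habs : Filter.Tendsto
      (fun k : ℕ => |(U k * (V k)ᵀ - Usv * Sr * Vsvᵀ) i j|) Filter.atTop (nhds 0) := by
    have h1 := (Real.continuous_sqrt.tendsto 0).comp hsq
    rw [Real.sqrt_zero] at h1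
    convert h1 using 2 with k
    rw [Function.comp_apply, Real.sqrt_sq_eq_abs]
  have herr0 : Filter.Tendsto
      (fun k : ℕ => (U k * (V k)ᵀ - Usv * Sr * Vsvᵀ) i j) Filter.atTop (nhds 0) := by
    exact tendsto_of_tendsto_of_tendsto_of_le_of_le (by simpa using habs.neg) habs
      (fun k => neg_abs_le _) (fun k => le_abs_self _)
  have hfin := herr0.add (tendsto_const_nhds :
    Filter.Tendsto (fun _ : ℕ => (Usv * Sr * Vsvᵀ) i j) Filter.atTop
      (nhds ((Usv * Sr * Vsvᵀ) i j)))
  rw [zero_add] at hfin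
  convert hfin using 2 with k
  simp [Matrix.sub_apply]
end
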